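/- Let H be a subgroup of a countable group G. The coset space G/H admits a proper G-invariant ultrametric if and only if H has locally finite index in G. -/

import Mathlib

/-- `d` is a metric (as a two-variable real function). -/
def IsMetricFun {X : Type*} (d : X → X → ℝ) : Prop :=
  (∀ x y : X, d x y = 0 ↔ x = y) ∧ (∀ x y : X, d x y = d y x) ∧
    (∀ x y z : X, d x z ≤ d x y + d y z)

/-- A subgroup `H` of a group `G` has locally finite index in `G`: `H` has finite index
in every subgroup of `G` generated by `H ∪ F` for a finite set `F ⊆ G`. -/
def LocallyFiniteIndex {G : Type*} [Group G] (H : Subgroup G) : Prop :=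
  ∀ F : Finset G, H.relIndex (H ⊔ Subgroup.closure (F : Set G)) ≠ 0

/-- For a subgroup `H` of a countable group `G`, the coset space `G ⧸ H` admits a proper
`G`-invariant ultrametric iff `H` has locally finite index in `G`. -/
theorem exists_proper_invariant_ultrametric_iff_locallyFiniteIndex
    (G : Type) [Group G] [Countable G] (H : Subgroup G) :
    (∃ d : G ⧸ H → G ⧸ H → ℝ, IsMetricFun d ∧
      (∀ u v w : G ⧸ H, d u w ≤ max (d u v) (d v w)) ∧
      (∀ (g : G) (u v : G ⧸ H), d (g • u) (g • v) = d u v) ∧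
      (∀ (u : G ⧸ H) (r : ℝ), {v : G ⧸ H | d u v ≤ r}.Finite)) ↔
    LocallyFiniteIndex H := by
  constructor
  · -- metric → locally finite index
    rintro ⟨d, ⟨hd0, hsym, htri⟩, hult, hinv, hprop⟩ F
    have hnn : ∀ u v : G ⧸ H, 0 ≤ d u v := by
      intro u v
      have h1 : d u u = 0 := (hd0 u u).mpr rfl
      have h2 := htri u v u
      have h3 := hsym u v
      linarith
    set R : ℝ := ∑ g ∈ F, d ((1 : G) : G ⧸ H) ((g : G) : G ⧸ H) with hR
    have hRnn : 0 ≤ R := Finset.sum_nonneg fun g _ => hnn _ _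
    have hgR : ∀ g ∈ F, d ((1 : G) : G ⧸ H) ((g : G) : G ⧸ H) ≤ R := fun g hg =>
      Finset.single_le_sum (fun i _ => hnn _ _) hg
    set K : Subgroup G := H ⊔ Subgroup.closure (F : Set G) with hKdef
    have hKc : K = Subgroup.closure ((H : Set G) ∪ (F : Set G)) := by
      rw [Subgroup.closure_union, Subgroup.closure_eq]
    have key : ∀ k ∈ K, d ((1 : G) : G ⧸ H) ((k : G) : G ⧸ H) ≤ R := by
      intro k hk
      rw [hKc] at hk
      induction hk using Subgroup.closure_induction with
      | mem x hx =>
        rcases hx with hx | hx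
        · have hx1 : ((x : G) : G ⧸ H) = ((1 : G) : G ⧸ H) := by
            rw [QuotientGroup.eq]
            simpa using inv_mem hx
          rw [hx1, (hd0 _ _).mpr rfl]
          exact hRnn
        · exact hgR x hx
      | one => rw [(hd0 _ _).mpr rfl]; exact hRnn
      | mul x y hx hy ihx ihy =>
        have e1 : d ((x : G) : G ⧸ H) ((x * y : G) : G ⧸ H)
            = d ((1 : G) : G ⧸ H) ((y : G) : G ⧸ H) := by
          have h := hinv x ((1 : G) : G ⧸ H) ((y : G) : G ⧸ H)
          simpa [MulAction.Quotient.smul_mk, smul_eq_mul, mul_one] using h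
        calc d ((1 : G) : G ⧸ H) ((x * y : G) : G ⧸ H)
            ≤ max (d ((1 : G) : G ⧸ H) ((x : G) : G ⧸ H))
                (d ((x : G) : G ⧸ H) ((x * y : G) : G ⧸ H)) := hult _ _ _
          _ ≤ R := by rw [e1]; exact max_le ihx ihy
      | inv x hx ihx =>
        have h := hinv x ((1 : G) : G ⧸ H) ((x⁻¹ : G) : G ⧸ H)
        have h' : d ((x : G) : G ⧸ H) ((1 : G) : G ⧸ H)
            = d ((1 : G) : G ⧸ H) ((x⁻¹ : G) : G ⧸ H) := by
          simpa [MulAction.Quotient.smul_mk, smul_eq_mul, mul_one] using h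
        rw [← h', hsym]; exact ihx
    -- the quotient K ⧸ (H.subgroupOf K) injects into the finite ball
    have hfin : Finite {v : G ⧸ H | d ((1 : G) : G ⧸ H) v ≤ R} :=
      (hprop _ R).to_subtype
    let j0 : K → {v : G ⧸ H | d ((1 : G) : G ⧸ H) v ≤ R} :=
      fun k => ⟨((k : G) : G ⧸ H), key k k.2⟩
    have hcompat : ∀ a b : K, (QuotientGroup.leftRel (H.subgroupOf K)) a b →
        j0 a = j0 b := by
      intro a b hab
      have hmem0 : a⁻¹ * b ∈ H.subgroupOf K :=
        QuotientGroup.leftRel_apply.mp hab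
      have hmem : (a : G)⁻¹ * (b : G) ∈ H := by
        simpa [Subgroup.mem_subgroupOf] using hmem0
      exact Subtype.ext (QuotientGroup.eq.mpr hmem)
    have hinj : Function.Injective (Quotient.lift j0 hcompat :
        K ⧸ H.subgroupOf K → {v : G ⧸ H | d ((1 : G) : G ⧸ H) v ≤ R}) := by
      intro q1 q2
      induction q1 using Quotient.ind with | _ a =>
      induction q2 using Quotient.ind with | _ b =>
      intro h
      have h' : ((a : G) : G ⧸ H) = ((b : G) : G ⧸ H) := congrArg Subtype.val h
      have hmem : (a : G)⁻¹ * (b : G) ∈ H := QuotientGroup.eq.mp h'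
      have hmem0 : a⁻¹ * b ∈ H.subgroupOf K := by
        simpa [Subgroup.mem_subgroupOf] using hmem
      exact Quotient.sound (QuotientGroup.leftRel_apply.mpr hmem0)
    have : Finite (K ⧸ H.subgroupOf K) := Finite.of_injective _ hinj
    show (H.subgroupOf K).index ≠ 0
    exact Subgroup.index_ne_zero_of_finite
  · -- locally finite index → metric
    intro hLFI
    classical
    obtain ⟨f, hf⟩ := exists_surjective_nat G
    set K : ℕ → Subgroup G :=
      fun n => H ⊔ Subgroup.closure (((Finset.range n).image f : Finset G) : Set G) with hKdef
    have hmono : Monotone K := by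
      intro m n hmn
      exact sup_le_sup_left (Subgroup.closure_mono (by
        exact_mod_cast Finset.coe_subset.mpr
          (Finset.image_subset_image (Finset.range_subset_range.mpr hmn)))) H
    have hHle : ∀ n, H ≤ K n := fun n => le_sup_left
    have hK0 : K 0 = H := by
      simp only [hKdef, Finset.range_zero, Finset.image_empty, Finset.coe_empty,
        Subgroup.closure_empty, sup_bot_eq]
    have hexh : ∀ g : G, ∃ n, g ∈ K n := by
      intro g
      obtain ⟨m, rfl⟩ := hf g
      refine ⟨m + 1, le_sup_right (α := Subgroup G) (Subgroup.subset_closure ?_)⟩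
      simp only [Finset.coe_image, Set.mem_image, Finset.mem_coe, Finset.mem_range]
      exact ⟨m, Nat.lt_succ_self m, rfl⟩
    set p : G ⧸ H → G ⧸ H → ℕ → Prop := fun u v n =>
      ∃ x y : G, (x : G ⧸ H) = u ∧ (y : G ⧸ H) = v ∧ x⁻¹ * y ∈ K n with hpdef
    have transfer : ∀ (u v : G ⧸ H) (n : ℕ) (x y : G), p u v n →
        (x : G ⧸ H) = u → (y : G ⧸ H) = v → x⁻¹ * y ∈ K n := by
      rintro u v n x y ⟨x', y', hx', hy', hm⟩ hx hy
      have h1 : x⁻¹ * x' ∈ H := QuotientGroup.eq.mp (hx.trans hx'.symm)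
      have h2 : y'⁻¹ * y ∈ H := QuotientGroup.eq.mp (hy'.trans hy.symm)
      have : x⁻¹ * y = (x⁻¹ * x') * ((x'⁻¹ * y') * (y'⁻¹ * y)) := by group
      rw [this]
      exact mul_mem (hHle n h1) (mul_mem hm (hHle n h2))
    have upward : ∀ (u v : G ⧸ H) {m n : ℕ}, m ≤ n → p u v m → p u v n := by
      rintro u v m n hmn ⟨x, y, hx, hy, hm⟩
      exact ⟨x, y, hx, hy, hmono hmn hm⟩
    have hne : ∀ u v : G ⧸ H, {n : ℕ | p u v n}.Nonempty := by
      intro u v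
      obtain ⟨x, rfl⟩ := QuotientGroup.mk_surjective u
      obtain ⟨y, rfl⟩ := QuotientGroup.mk_surjective v
      obtain ⟨n, hn⟩ := hexh (x⁻¹ * y)
      exact ⟨n, x, y, rfl, rfl, hn⟩
    set D : G ⧸ H → G ⧸ H → ℕ := fun u v => sInf {n : ℕ | p u v n} with hDdef
    have hmem : ∀ u v, p u v (D u v) := fun u v => Nat.sInf_mem (hne u v)
    have hDle : ∀ (u v : G ⧸ H) (n : ℕ), p u v n → D u v ≤ n := fun u v n hn =>
      Nat.sInf_le hn
    have hsymmP : ∀ (u v : G ⧸ H) (n : ℕ), p u v n → p v u n := by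
      rintro u v n ⟨x, y, hx, hy, hm⟩
      refine ⟨y, x, hy, hx, ?_⟩
      have : y⁻¹ * x = (x⁻¹ * y)⁻¹ := by group
      rw [this]; exact inv_mem hm
    have hinvP : ∀ (g : G) (u v : G ⧸ H) (n : ℕ), p u v n → p (g • u) (g • v) n := by
      rintro g u v n ⟨x, y, hx, hy, hm⟩
      refine ⟨g * x, g * y, ?_, ?_, ?_⟩
      · rw [← hx]; rfl
      · rw [← hy]; rfl
      · have : (g * x)⁻¹ * (g * y) = x⁻¹ * y := by group
        rw [this]; exact hm
    have hzero : ∀ u v : G ⧸ H, p u v 0 ↔ u = v := by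
      intro u v
      constructor
      · rintro ⟨x, y, hx, hy, hm⟩
        rw [hK0] at hm
        rw [← hx, ← hy]
        exact QuotientGroup.eq.mpr hm
      · rintro rfl
        obtain ⟨x, rfl⟩ := QuotientGroup.mk_surjective u
        exact ⟨x, x, rfl, rfl, by simp [hK0, one_mem]⟩
    refine ⟨fun u v => (D u v : ℝ), ⟨?_, ?_, ?_⟩, ?_, ?_, ?_⟩
    · -- d = 0 iff eq
      intro u v
      rw [Nat.cast_eq_zero]
      constructor
      · intro h
        exact (hzero u v).mp (h ▸ hmem u v)
      · intro h
        exact Nat.eq_zero_of_le_zero (hDle u v 0 ((hzero u v).mpr h))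
    · -- symmetry
      intro u v
      have h1 : D u v ≤ D v u := hDle _ _ _ (hsymmP _ _ _ (hmem v u))
      have h2 : D v u ≤ D u v := hDle _ _ _ (hsymmP _ _ _ (hmem u v))
      exact congrArg Nat.cast (le_antisymm h1 h2)
    · -- triangle
      intro u v w
      have hu : D u w ≤ max (D u v) (D v w) := by
        refine hDle _ _ _ ?_
        obtain ⟨x, y, hx, hy, hm1⟩ := hmem u v
        obtain ⟨z, hz⟩ := QuotientGroup.mk_surjective w
        have hm2 : y⁻¹ * z ∈ K (D v w) := transfer v w _ y z (hmem v w) hy hz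
        refine ⟨x, z, hx, hz, ?_⟩
        have : x⁻¹ * z = (x⁻¹ * y) * (y⁻¹ * z) := by group
        rw [this]
        exact mul_mem (hmono (le_max_left _ _) hm1) (hmono (le_max_right _ _) hm2)
      calc (D u w : ℝ) ≤ (max (D u v) (D v w) : ℕ) := by exact_mod_cast hu
        _ ≤ (D u v : ℝ) + (D v w : ℝ) := by
            rw [Nat.cast_max]
            exact max_le (le_add_of_nonneg_right (Nat.cast_nonneg _))
              (le_add_of_nonneg_left (Nat.cast_nonneg _))
    · -- ultrametric
      intro u v w
      have hu : D u w ≤ max (D u v) (D v w) := by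
        refine hDle _ _ _ ?_
        obtain ⟨x, y, hx, hy, hm1⟩ := hmem u v
        obtain ⟨z, hz⟩ := QuotientGroup.mk_surjective w
        have hm2 : y⁻¹ * z ∈ K (D v w) := transfer v w _ y z (hmem v w) hy hz
        refine ⟨x, z, hx, hz, ?_⟩
        have : x⁻¹ * z = (x⁻¹ * y) * (y⁻¹ * z) := by group
        rw [this]
        exact mul_mem (hmono (le_max_left _ _) hm1) (hmono (le_max_right _ _) hm2)
      calc (D u w : ℝ) ≤ (max (D u v) (D v w) : ℕ) := by exact_mod_cast hu
        _ = max (D u v : ℝ) (D v w : ℝ) := by rw [Nat.cast_max]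
    · -- invariance
      intro g u v
      have h1 : D (g • u) (g • v) ≤ D u v := hDle _ _ _ (hinvP g u v _ (hmem u v))
      have h2 : D u v ≤ D (g • u) (g • v) := by
        have := hinvP g⁻¹ (g • u) (g • v) _ (hmem (g • u) (g • v))
        simpa [inv_smul_smul] using hDle u v _ (by simpa [inv_smul_smul] using this)
      exact congrArg Nat.cast (le_antisymm h1 h2)
    · -- properness
      intro u r
      rcases lt_or_ge r 0 with hr | hr
      · have : {v : G ⧸ H | (D u v : ℝ) ≤ r} = ∅ := by
          ext v
          simp only [Set.mem_setOf_eq, Set.mem_empty_iff_false, iff_false, not_le]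
          exact lt_of_lt_of_le hr (Nat.cast_nonneg _)
        rw [this]; exact Set.finite_empty
      · set N := Nat.floor r with hN
        obtain ⟨x, hx⟩ := QuotientGroup.mk_surjective u
        have hrel : H.relIndex (K N) ≠ 0 := hLFI ((Finset.range N).image f)
        have hfinQ : Finite (↥(K N) ⧸ H.subgroupOf (K N)) := by
          have : Nat.card (↥(K N) ⧸ H.subgroupOf (K N)) ≠ 0 := hrel
          exact Nat.finite_of_card_ne_zero this
        let j0 : ↥(K N) → G ⧸ H := fun k => ((x * (k : G) : G) : G ⧸ H)
        have hcompat : ∀ a b : ↥(K N),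
            (QuotientGroup.leftRel (H.subgroupOf (K N))) a b → j0 a = j0 b := by
          intro a b hab
          have hmem0 : a⁻¹ * b ∈ H.subgroupOf (K N) :=
            QuotientGroup.leftRel_apply.mp hab
          have hmemH : (a : G)⁻¹ * (b : G) ∈ H := by
            simpa [Subgroup.mem_subgroupOf] using hmem0
          refine QuotientGroup.eq.mpr ?_
          have : (x * (a : G))⁻¹ * (x * (b : G)) = (a : G)⁻¹ * b := by group
          rw [this]; exact hmemH
        set χ : (↥(K N) ⧸ H.subgroupOf (K N)) → G ⧸ H :=
          Quotient.lift j0 hcompat with hχ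
        have hsub : {v : G ⧸ H | (D u v : ℝ) ≤ r} ⊆ Set.range χ := by
          intro v hv
          obtain ⟨y, hy⟩ := QuotientGroup.mk_surjective v
          have hD : D u v ≤ N := Nat.le_floor hv
          have hp : p u v N := upward u v hD (hmem u v)
          have hmemK : x⁻¹ * y ∈ K N := transfer u v N x y hp hx hy
          set k : ↥(K N) := ⟨x⁻¹ * y, hmemK⟩ with hk
          refine ⟨QuotientGroup.mk k, ?_⟩
          have hred : χ (QuotientGroup.mk k) = j0 k := rfl
          rw [hred, ← hy]
          show ((x * (x⁻¹ * y) : G) : G ⧸ H) = _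
          congr 1
          group
        exact Set.Finite.subset (Set.finite_range χ) hsub
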